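/- Let $(A,*_A,P,\omega)$ be a Rota-Baxter commutative associative algebra with a nondegenerate Connes cocycle of weight $\lambda$, and let $\circ_A$ be the Zinbiel product defined by $\omega(x\circ_A y,z)=\omega(y,x*_A z)$. Then $P$ is a Rota-Baxter operator of weight $\lambda$ on the Zinbiel algebra $(A,\circ_A)$; hence $(A,\circ_A,P,\omega)$ is a quadratic Rota-Baxter Zinbiel algebra of weight $\lambda$. -/
import Mathlib


/-- Let `(A, *, P, ω)` be a Rota-Baxter commutative associative algebra with a
nondegenerate Connes cocycle of weight `λ`, and let `∘` be the Zinbiel product defined by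
`ω(x ∘ y, z) = ω(y, x * z)`.  Then `P` is a Rota-Baxter operator of weight `λ` on the
Zinbiel algebra `(A, ∘)`; hence `(A, ∘, P, ω)` is a quadratic Rota-Baxter Zinbiel algebra
of weight `λ`. -/
theorem rb_connes_cocycle_to_quadratic_rb_zinbiel {K : Type*} [Field K] {A : Type*}
    [AddCommGroup A] [Module K A]
    (smul : A →ₗ[K] A →ₗ[K] A)
    (hcomm : ∀ x y : A, smul x y = smul y x)
    (hassoc : ∀ x y z : A, smul (smul x y) z = smul x (smul y z))
    (P : A →ₗ[K] A) (l : K)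
    (hP : ∀ x y : A, smul (P x) (P y) = P (smul (P x) y + smul x (P y) + l • smul x y))
    (ω : A →ₗ[K] A →ₗ[K] K)
    (hskew : ∀ x y : A, ω x y = -ω y x)
    (hnd : ∀ x : A, (∀ y : A, ω x y = 0) → x = 0)
    (hcc : ∀ x y z : A, ω (smul x y) z + ω (smul y z) x + ω (smul z x) y = 0)
    (hcompat : ∀ x y : A, ω (P x) y + ω x (P y) + l • ω x y = 0)
    (circ : A →ₗ[K] A →ₗ[K] A)
    (hdef : ∀ x y z : A, ω (circ x y) z = ω y (smul x z)) :
    (∀ x y : A, circ (P x) (P y) = P (circ (P x) y + circ x (P y) + l • circ x y)) ∧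
    (∀ x y z : A, circ x (circ y z) = circ (circ x y + circ y x) z) ∧
    (∀ x y z : A, ω (circ x y) z = ω y (circ x z + circ z x)) := by
  have ext : ∀ a b : A, (∀ z : A, ω a z = ω b z) → a = b := by
    intro a b h
    have h0 : a - b = 0 := by
      apply hnd
      intro y
      simp [map_sub, LinearMap.sub_apply, h y]
    exact sub_eq_zero.mp h0
  have key : ∀ x y : A, circ x y + circ y x = smul x y := by
    intro x y
    apply ext
    intro z
    have hc := hcc x y z
    rw [hcomm z x] at hc
    simp only [map_add, LinearMap.add_apply, hdef]
    linear_combination hskew y (smul x z) + hskew x (smul y z) - hc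
  refine ⟨?_, ?_, ?_⟩
  · intro x y
    apply ext
    intro z
    have c1 := hcompat (circ (P x) y) z
    have c2 := hcompat (circ x (P y)) z
    have c3 := hcompat (circ x y) z
    have cy := hcompat y (smul (P x) z + smul x (P z) + l • smul x z)
    simp only [hdef, hP, map_add, map_smul, LinearMap.add_apply, LinearMap.smul_apply,
      smul_eq_mul] at c1 c2 c3 cy ⊢
    linear_combination cy - c1 - c2 - l * c3
  · intro x y z
    apply ext
    intro w
    rw [hdef, hdef, key, hdef, hcomm x y, hassoc]
  · intro x y z
    rw [key x z]
    exact hdef x y z
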